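/- (Andreief/Heine identity) Let μ be a measure on a measurable space E and let φ₁,…,φ_n, ψ₁,…,ψ_n : E → ℂ be measurable functions such that all products φ_j ψ_k are μ-integrable. Then ∫_{Eⁿ} det[φ_j(s_k)]_{j,k=1}^n · det[ψ_j(s_k)]_{j,k=1}^n dμ(s₁)···dμ(s_n) = n! · det[ ∫_E φ_j(s) ψ_k(s) dμ(s) ]_{j,k=1}^n. -/

import Mathlib

open MeasureTheory

/-- **Andreief/Heine identity.** -/
theorem stmt10 {E : Type*} [MeasurableSpace E] (μ : Measure E) [SigmaFinite μ]
    {n : ℕ} (φ ψ : Fin n → E → ℂ)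
    (hφ : ∀ j, Measurable (φ j)) (hψ : ∀ j, Measurable (ψ j))
    (hint : ∀ j k, Integrable (fun s => φ j s * ψ k s) μ) :
    (∫ s : Fin n → E,
        (Matrix.of fun j k : Fin n => φ j (s k)).det
          * (Matrix.of fun j k : Fin n => ψ j (s k)).det
        ∂(Measure.pi fun _ : Fin n => μ))
      = (n.factorial : ℂ)
        * (Matrix.of fun j k : Fin n => ∫ s, φ j s * ψ k s ∂μ).det := by
  letI : MeasureSpace E := ⟨μ⟩
  set A : Matrix (Fin n) (Fin n) ℂ := Matrix.of fun j k => ∫ s, φ j s * ψ k s ∂μ with hA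
  -- pointwise Leibniz expansion of the product of determinants
  have hpt : ∀ s : Fin n → E,
      (Matrix.of fun j k : Fin n => φ j (s k)).det
        * (Matrix.of fun j k : Fin n => ψ j (s k)).det
      = ∑ σ : Equiv.Perm (Fin n), ∑ τ : Equiv.Perm (Fin n),
          (((Equiv.Perm.sign σ : ℤ) : ℂ) * ((Equiv.Perm.sign τ : ℤ) : ℂ)) *
            ∏ k, (φ (σ k) (s k) * ψ (τ k) (s k)) := by
    intro s
    rw [Matrix.det_apply', Matrix.det_apply', Finset.sum_mul_sum]
    refine Finset.sum_congr rfl fun σ _ => Finset.sum_congr rfl fun τ _ => ?_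
    simp only [Matrix.of_apply, Finset.prod_mul_distrib]
    ring
  -- integrability of each term
  have hterm : ∀ σ τ : Equiv.Perm (Fin n),
      Integrable (fun s : Fin n → E => ∏ k, (φ (σ k) (s k) * ψ (τ k) (s k)))
        (Measure.pi fun _ : Fin n => μ) := fun σ τ =>
    Integrable.fintype_prod (f := fun k s => φ (σ k) s * ψ (τ k) s) (fun k => hint _ _)
  -- integral of each term via Fubini
  have hint2 : ∀ σ τ : Equiv.Perm (Fin n),
      (∫ s : Fin n → E, ∏ k, (φ (σ k) (s k) * ψ (τ k) (s k))
          ∂(Measure.pi fun _ : Fin n => μ))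
        = ∏ k, A (σ k) (τ k) :=
    fun σ τ => integral_fintype_prod_eq_prod (fun k s => φ (σ k) s * ψ (τ k) s)
  calc (∫ s : Fin n → E,
        (Matrix.of fun j k : Fin n => φ j (s k)).det
          * (Matrix.of fun j k : Fin n => ψ j (s k)).det
        ∂(Measure.pi fun _ : Fin n => μ))
      = ∑ σ : Equiv.Perm (Fin n), ∑ τ : Equiv.Perm (Fin n),
          (((Equiv.Perm.sign σ : ℤ) : ℂ) * ((Equiv.Perm.sign τ : ℤ) : ℂ)) *
            ∏ k, A (σ k) (τ k) := by
        simp_rw [hpt]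
        rw [integral_finset_sum _ (fun σ _ => integrable_finset_sum _
          (fun τ _ => ((hterm σ τ).const_mul _)))]
        refine Finset.sum_congr rfl fun σ _ => ?_
        rw [integral_finset_sum _ (fun τ _ => ((hterm σ τ).const_mul _))]
        refine Finset.sum_congr rfl fun τ _ => ?_
        rw [integral_const_mul, hint2]
    _ = (n.factorial : ℂ) * A.det := by
        have key : ∀ σ : Equiv.Perm (Fin n),
            (∑ τ : Equiv.Perm (Fin n),
              (((Equiv.Perm.sign σ : ℤ) : ℂ) * ((Equiv.Perm.sign τ : ℤ) : ℂ)) *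
                ∏ k, A (σ k) (τ k)) = A.det := by
          intro σ
          rw [← Equiv.sum_comp (Equiv.mulRight σ)]
          have hdet : A.det = ∑ ρ : Equiv.Perm (Fin n),
              ((Equiv.Perm.sign ρ : ℤ) : ℂ) * ∏ j, A j (ρ j) := by
            rw [← Matrix.det_transpose, Matrix.det_apply']
            simp [Matrix.transpose_apply]
          rw [hdet]
          refine Finset.sum_congr rfl fun ρ _ => ?_
          have h1 : ∏ k, A (σ k) ((Equiv.mulRight σ ρ) k) = ∏ j, A j (ρ j) := by
            simp only [Equiv.coe_mulRight, Equiv.Perm.mul_apply]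
            exact Equiv.prod_comp σ (fun j => A j (ρ j))
          rw [h1]
          have h2 : (((Equiv.Perm.sign σ : ℤ) : ℂ) *
              ((Equiv.Perm.sign (Equiv.mulRight σ ρ) : ℤ) : ℂ))
              = ((Equiv.Perm.sign ρ : ℤ) : ℂ) := by
            have hu : ((Equiv.Perm.sign σ : ℤ) : ℂ) * ((Equiv.Perm.sign σ : ℤ) : ℂ) = 1 := by
              rw [← Int.cast_mul, ← Units.val_mul, Int.units_mul_self]
              exact Int.cast_one
            calc (((Equiv.Perm.sign σ : ℤ) : ℂ) *
                ((Equiv.Perm.sign (Equiv.mulRight σ ρ) : ℤ) : ℂ))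
                = ((Equiv.Perm.sign ρ : ℤ) : ℂ) *
                  (((Equiv.Perm.sign σ : ℤ) : ℂ) * ((Equiv.Perm.sign σ : ℤ) : ℂ)) := by
                  rw [show Equiv.mulRight σ ρ = ρ * σ from rfl, Equiv.Perm.sign_mul,
                    Units.val_mul, Int.cast_mul]
                  ring
              _ = ((Equiv.Perm.sign ρ : ℤ) : ℂ) := by rw [hu, mul_one]
          rw [h2]
        rw [Finset.sum_congr rfl (fun σ _ => key σ), Finset.sum_const, Finset.card_univ,
          Fintype.card_perm, Fintype.card_fin, nsmul_eq_mul]
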